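/- (Bernstein–Walsh lemma) Let E ⊂ ℂ be compact with positive logarithmic capacity and Green's function g(z,∞) for the unbounded component Ω of ℂ∖E. If p is a polynomial of degree at most n with ‖p‖_E := max_{x∈E}|p(x)| ≤ M, then |p(z)| ≤ M·e^{n·g(z,∞)} for all z ∈ Ω. -/

import Mathlib

open Filter Set Topology in
/-- Maximum principle for functions that are locally moduli of analytic functions on a
connected open set, with a smallness condition outside a compact set and near the boundary. -/
lemma bw_max_principle (Ω : Set ℂ) (hopen : IsOpen Ω) (hpre : IsPreconnected Ω)
    (h : ℂ → ℝ)
    (hloc : ∀ z ∈ Ω, ∃ (U : Set ℂ) (F : ℂ → ℂ), IsOpen U ∧ z ∈ U ∧ U ⊆ Ω ∧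
      DifferentiableOn ℂ F U ∧ ∀ w ∈ U, h w = ‖F w‖)
    (m : ℝ) (K : Set ℂ) (hK : IsCompact K)
    (hfar : ∀ z ∈ Ω, z ∉ K → h z < m)
    (hne : ∃ z ∈ Ω, z ∉ K)
    (hbdry : ∀ ξ ∈ closure Ω \ Ω, ∀ᶠ z in nhdsWithin ξ Ω, h z < m) :
    ∀ z ∈ Ω, h z < m := by
  have hcont : ContinuousOn h Ω := by
    intro z hz
    obtain ⟨U, F, hU, hzU, hUΩ, hF, hhF⟩ := hloc z hz
    have hFc : ContinuousAt (fun w => ‖F w‖) z :=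
      ((hF.differentiableAt (hU.mem_nhds hzU)).continuousAt).norm
    have heq : (fun w => h w) =ᶠ[nhds z] (fun w => ‖F w‖) := by
      filter_upwards [hU.mem_nhds hzU] with w hw using hhF w hw
    exact (hFc.congr heq.symm).continuousWithinAt
  by_contra hcon
  push_neg at hcon
  obtain ⟨z₀, hz₀Ω, hz₀⟩ := hcon
  set S : Set ℂ := {z ∈ Ω | m ≤ h z} with hS
  have hSK : S ⊆ K := by
    intro z hzS
    by_contra hzK
    exact absurd hzS.2 (not_le.mpr (hfar z hzS.1 hzK))
  have hSΩ : S ⊆ Ω := fun z hzS => hzS.1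
  have hclΩ : closure S ⊆ Ω := by
    intro ξ hξ
    by_contra hξΩ
    have hξcl : ξ ∈ closure Ω := closure_mono hSΩ hξ
    have hev := hbdry ξ ⟨hξcl, hξΩ⟩
    rw [eventually_nhdsWithin_iff] at hev
    obtain ⟨z, hz, hzS⟩ := mem_closure_iff_nhds.mp hξ _ hev
    exact absurd hzS.2 (not_le.mpr (hz hzS.1))
  have hclK : IsCompact (closure S) :=
    hK.of_isClosed_subset isClosed_closure (closure_minimal hSK hK.isClosed)
  have hSne : (closure S).Nonempty := ⟨z₀, subset_closure ⟨hz₀Ω, hz₀⟩⟩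
  obtain ⟨zs, hzsS, hmax⟩ := hclK.exists_isMaxOn hSne (hcont.mono hclΩ)
  set m' := h zs with hm'
  have hzsΩ : zs ∈ Ω := hclΩ hzsS
  have hm'ge : m ≤ m' := le_trans hz₀ (hmax (subset_closure ⟨hz₀Ω, hz₀⟩))
  have hglob : ∀ z ∈ Ω, h z ≤ m' := by
    intro z hz
    by_cases hcase : m ≤ h z
    · exact hmax (subset_closure ⟨hz, hcase⟩)
    · linarith [not_le.mp hcase]
  set A : Set ℂ := {z ∈ Ω | h z = m'} with hA
  have hAopen : IsOpen A := by
    rw [isOpen_iff_mem_nhds]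
    intro w hw
    obtain ⟨U, F, hU, hwU, hUΩ, hF, hhF⟩ := hloc w hw.1
    have hd : ∀ᶠ z in nhds w, DifferentiableAt ℂ F z := by
      filter_upwards [hU.mem_nhds hwU] with z hz using hF.differentiableAt (hU.mem_nhds hz)
    have hlm : IsLocalMax (norm ∘ F) w := by
      filter_upwards [hU.mem_nhds hwU] with z hz
      have : h z ≤ m' := hglob z (hUΩ hz)
      simpa [Function.comp, ← hhF z hz, ← hhF w hwU, hw.2] using this
    have hevq := Complex.eventually_eq_of_isLocalMax_norm hd hlm
    filter_upwards [hevq, hU.mem_nhds hwU] with y hy hyU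
    refine ⟨hUΩ hyU, ?_⟩
    rw [hhF y hyU, hy, ← hhF w hwU, hw.2]
  set B : Set ℂ := Ω ∩ (fun z => h z) ⁻¹' {m'}ᶜ with hB
  have hBopen : IsOpen B :=
    hcont.isOpen_inter_preimage hopen isOpen_compl_singleton
  have hcover : Ω ⊆ A ∪ B := by
    intro z hz
    by_cases hcase : h z = m'
    · exact Or.inl ⟨hz, hcase⟩
    · exact Or.inr ⟨hz, hcase⟩
  obtain ⟨z₁, hz₁Ω, hz₁K⟩ := hne
  have hz₁lt : h z₁ < m := hfar z₁ hz₁Ω hz₁K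
  have hAne : (Ω ∩ A).Nonempty := ⟨zs, hzsΩ, hzsΩ, rfl⟩
  have hBne : (Ω ∩ B).Nonempty := ⟨z₁, hz₁Ω, hz₁Ω, by
    simp only [Set.mem_preimage, Set.mem_compl_iff, Set.mem_singleton_iff]
    intro hcontra
    rw [hcontra] at hz₁lt
    linarith⟩
  obtain ⟨x, _, hxA, hxB⟩ := hpre A B hAopen hBopen hcover hAne hBne
  exact hxB.2 hxA.2

/-- `g` is harmonic on `Ω`: locally the real part of an analytic function. -/
def IsHarmonicOn (g : ℂ → ℝ) (Ω : Set ℂ) : Prop :=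
  ∀ z ∈ Ω, ∃ (U : Set ℂ) (f : ℂ → ℂ), IsOpen U ∧ z ∈ U ∧ U ⊆ Ω ∧
    DifferentiableOn ℂ f U ∧ ∀ w ∈ U, g w = (f w).re

/-- Bernstein–Walsh lemma: if `g` is the Green's function with pole at infinity of the
unbounded component `Ω` of the complement of a compact `E ⊆ ℂ` (harmonic on `Ω`,
`g - log|z|` bounded near `∞`, boundary values `0`), and `p` is a polynomial of degree
at most `n` with `|p| ≤ M` on `E`, then `|p(z)| ≤ M·e^{n·g(z)}` on `Ω`. -/
theorem bernstein_walsh (E : Set ℂ) (hE : IsCompact E) (hEne : E.Nonempty)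
    (Ω : Set ℂ) (hΩ : ∃ z₀ ∈ Eᶜ, Ω = connectedComponentIn Eᶜ z₀)
    (hΩunb : ¬ Bornology.IsBounded Ω)
    (g : ℂ → ℝ) (hharm : IsHarmonicOn g Ω)
    (hgrow : ∃ C R : ℝ, ∀ z ∈ Ω, R ≤ ‖z‖ →
      |g z - Real.log (‖z‖)| ≤ C)
    (hbd : ∀ ξ ∈ frontier Ω, Filter.Tendsto g (nhdsWithin ξ Ω) (nhds 0))
    (n : ℕ) (p : Polynomial ℂ) (hdeg : p.degree ≤ n)
    (M : ℝ) (hM : ∀ x ∈ E, ‖p.eval x‖ ≤ M) :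
    ∀ z ∈ Ω, ‖p.eval z‖ ≤ M * Real.exp (n * g z) := by
  obtain ⟨c, hc, hΩeq⟩ := hΩ
  have hEco : IsOpen Eᶜ := hE.isClosed.isOpen_compl
  have hopen : IsOpen Ω := hΩeq ▸ hEco.connectedComponentIn
  have hpre : IsPreconnected Ω := hΩeq ▸ isPreconnected_connectedComponentIn
  -- the boundary of Ω lies in E
  have hfront : frontier Ω ⊆ E := by
    intro ξ hξ
    by_contra hξE
    have hξc : ξ ∈ Eᶜ := hξE
    have hξcl : ξ ∈ closure Ω := hξ.1
    have hV : IsOpen (connectedComponentIn Eᶜ ξ) := hEco.connectedComponentIn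
    have hξV : ξ ∈ connectedComponentIn Eᶜ ξ := mem_connectedComponentIn hξc
    obtain ⟨y, hyV, hyΩ⟩ := _root_.mem_closure_iff.mp hξcl _ hV hξV
    have h1 : connectedComponentIn Eᶜ ξ = connectedComponentIn Eᶜ y :=
      connectedComponentIn_eq hyV
    have h2 : connectedComponentIn Eᶜ c = connectedComponentIn Eᶜ y :=
      connectedComponentIn_eq (hΩeq ▸ hyΩ)
    have hξΩ : ξ ∈ Ω := by rw [hΩeq, h2, ← h1]; exact hξV
    rw [hopen.frontier_eq] at hξ
    exact hξ.2 hξΩ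
  have hMnn : 0 ≤ M := by
    obtain ⟨x, hx⟩ := hEne
    exact le_trans (norm_nonneg _) (hM x hx)
  -- polynomial growth bound
  set A : ℝ := 1 + ∑ i ∈ Finset.range (n+1), ‖p.coeff i‖ with hAdef
  have hA1 : 1 ≤ A := by
    have : (0:ℝ) ≤ ∑ i ∈ Finset.range (n+1), ‖p.coeff i‖ :=
      Finset.sum_nonneg fun i _ => norm_nonneg _
    linarith
  have hA0 : 0 < A := lt_of_lt_of_le one_pos hA1
  have hpb : ∀ z : ℂ, 1 ≤ ‖z‖ →
      ‖p.eval z‖ ≤ A * ‖z‖ ^ n := by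
    intro z hz
    have hnd : p.natDegree < n + 1 :=
      Nat.lt_succ_of_le (Polynomial.natDegree_le_iff_degree_le.mpr hdeg)
    rw [Polynomial.eval_eq_sum_range' hnd]
    calc ‖∑ i ∈ Finset.range (n+1), p.coeff i * z ^ i‖
        ≤ ∑ i ∈ Finset.range (n+1), ‖p.coeff i * z ^ i‖ :=
          norm_sum_le _ _
      _ = ∑ i ∈ Finset.range (n+1), ‖p.coeff i‖ * ‖z‖ ^ i := by
          simp [map_mul, map_pow]
      _ ≤ ∑ i ∈ Finset.range (n+1), ‖p.coeff i‖ * ‖z‖ ^ n := by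
          refine Finset.sum_le_sum fun i hi => ?_
          exact mul_le_mul_of_nonneg_left
            (pow_le_pow_right₀ hz (Nat.lt_succ_iff.mp (Finset.mem_range.mp hi)))
            (norm_nonneg _)
      _ = (∑ i ∈ Finset.range (n+1), ‖p.coeff i‖) * ‖z‖ ^ n := by
          rw [Finset.sum_mul]
      _ ≤ A * ‖z‖ ^ n := by
          have hzn : (0:ℝ) ≤ ‖z‖ ^ n := pow_nonneg (norm_nonneg _) _
          nlinarith
  obtain ⟨C, R, hCR⟩ := hgrow
  -- the key estimate, for every exponent `α > n`
  have key : ∀ α : ℝ, (n:ℝ) < α → ∀ z ∈ Ω,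
      ‖p.eval z‖ * Real.exp (-(α * g z)) ≤ M := by
    intro α hαn z hz
    have hα0 : 0 < α := lt_of_le_of_lt (Nat.cast_nonneg n) hαn
    refine le_of_forall_pos_le_add ?_
    intro δ hδ
    set h : ℂ → ℝ := fun z => ‖p.eval z‖ * Real.exp (-(α * g z)) with hhdef
    -- parameters for the compact exhaustion
    set A' : ℝ := A * Real.exp (α * C) with hA'def
    have hA'0 : 0 < A' := mul_pos hA0 (Real.exp_pos _)
    set L₀ : ℝ := Real.log ((M + δ) / A') / ((n:ℝ) - α) with hL₀def
    set R₁ : ℝ := max (max R 1) (Real.exp (L₀ + 1)) with hR₁def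
    have hfar : ∀ w ∈ Ω, w ∉ Metric.closedBall (0:ℂ) R₁ → h w < M + δ := by
      intro w hw hwK
      have hwabs : R₁ < ‖w‖ := by
        simp only [Metric.mem_closedBall, Complex.dist_eq, sub_zero] at hwK
        linarith [not_le.mp hwK]
      have hw1 : 1 ≤ ‖w‖ :=
        le_trans (le_trans (le_max_right R 1) (le_max_left _ _)) hwabs.le
      have hwR : R ≤ ‖w‖ :=
        le_trans (le_trans (le_max_left R 1) (le_max_left _ _)) hwabs.le
      have hw0 : 0 < ‖w‖ := lt_of_lt_of_le one_pos hw1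
      set L : ℝ := Real.log (‖w‖) with hLdef
      have hgL : Real.log (‖w‖) - C ≤ g w := by
        have := (abs_le.mp (hCR w hw hwR)).1
        linarith
      have hLgt : L₀ + 1 < L := by
        rw [hLdef]
        exact (Real.lt_log_iff_exp_lt hw0).mpr
          (lt_of_le_of_lt (le_max_right (max R 1) (Real.exp (L₀ + 1))) hwabs)
      have hexp1 : Real.exp (-(α * g w)) ≤ Real.exp (α * C - α * L) := by
        apply Real.exp_le_exp.mpr
        have : α * (L - C) ≤ α * g w := mul_le_mul_of_nonneg_left hgL hα0.le
        nlinarith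
      have hpw : ‖p.eval w‖ ≤ A * Real.exp ((n:ℝ) * L) := by
        have := hpb w hw1
        rwa [show ‖w‖ ^ n = Real.exp ((n:ℝ) * L) by
          rw [Real.exp_nat_mul, hLdef, Real.exp_log hw0]] at this
      have hchain : h w ≤ A' * Real.exp (((n:ℝ) - α) * L) := by
        have h1 : h w ≤ A * Real.exp ((n:ℝ) * L) * Real.exp (α * C - α * L) := by
          calc h w ≤ A * Real.exp ((n:ℝ) * L) * Real.exp (-(α * g w)) :=
                mul_le_mul_of_nonneg_right hpw (Real.exp_pos _).le
            _ ≤ A * Real.exp ((n:ℝ) * L) * Real.exp (α * C - α * L) :=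
                mul_le_mul_of_nonneg_left hexp1
                  (mul_nonneg hA0.le (Real.exp_pos _).le)
        calc h w ≤ A * Real.exp ((n:ℝ) * L) * Real.exp (α * C - α * L) := h1
          _ = A' * Real.exp (((n:ℝ) - α) * L) := by
              rw [hA'def, mul_assoc, mul_assoc, ← Real.exp_add, ← Real.exp_add]
              ring_nf
      have hfin : A' * Real.exp (((n:ℝ) - α) * L) < M + δ := by
        have hnα : (n:ℝ) - α < 0 := by linarith
        have hL1 : ((n:ℝ) - α) * L < ((n:ℝ) - α) * L₀ := by
          have : L₀ < L := by linarith
          exact mul_lt_mul_of_neg_left this hnα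
        have hL₀eq : ((n:ℝ) - α) * L₀ = Real.log ((M + δ) / A') := by
          rw [hL₀def, mul_div_cancel₀]
          exact ne_of_lt hnα
        have hMδ : 0 < (M + δ) / A' := div_pos (by linarith) hA'0
        have : Real.exp (((n:ℝ) - α) * L) < (M + δ) / A' := by
          calc Real.exp (((n:ℝ) - α) * L) < Real.exp (((n:ℝ) - α) * L₀) :=
                Real.exp_lt_exp.mpr hL1
            _ = (M + δ) / A' := by rw [hL₀eq, Real.exp_log hMδ]
        calc A' * Real.exp (((n:ℝ) - α) * L) < A' * ((M + δ) / A') :=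
              mul_lt_mul_of_pos_left this hA'0
          _ = M + δ := by field_simp
      linarith
    have hne : ∃ w ∈ Ω, w ∉ Metric.closedBall (0:ℂ) R₁ := by
      rw [isBounded_iff_forall_norm_le] at hΩunb
      push_neg at hΩunb
      obtain ⟨w, hwΩ, hwn⟩ := hΩunb R₁
      refine ⟨w, hwΩ, ?_⟩
      simp only [Metric.mem_closedBall, Complex.dist_eq, sub_zero]
      linarith
    have hloc : ∀ w ∈ Ω, ∃ (U : Set ℂ) (F : ℂ → ℂ), IsOpen U ∧ w ∈ U ∧ U ⊆ Ω ∧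
        DifferentiableOn ℂ F U ∧ ∀ x ∈ U, h x = ‖F x‖ := by
      intro w hw
      obtain ⟨U, f, hU, hwU, hUΩ, hf, hgf⟩ := hharm w hw
      refine ⟨U, fun x => p.eval x * Complex.exp (-((α:ℂ) * f x)), hU, hwU, hUΩ, ?_, ?_⟩
      · exact (p.differentiable.differentiableOn).mul
          (Complex.differentiable_exp.comp_differentiableOn
            ((hf.const_mul (α:ℂ)).neg))
      · intro x hx
        rw [hhdef]
        simp only [norm_mul, Complex.norm_exp]
        congr 1
        rw [hgf x hx]
        simp [Complex.mul_re]
    have hbdry : ∀ ξ ∈ closure Ω \ Ω, ∀ᶠ w in nhdsWithin ξ Ω, h w < M + δ := by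
      intro ξ hξ
      have hξf : ξ ∈ frontier Ω := by rw [hopen.frontier_eq]; exact hξ
      have hξE : ξ ∈ E := hfront hξf
      have h1 : Filter.Tendsto (fun w => ‖p.eval w‖) (nhdsWithin ξ Ω)
          (nhds (‖p.eval ξ‖)) := by
        refine Filter.Tendsto.mono_left ?_ nhdsWithin_le_nhds
        exact (continuous_norm.comp p.continuous).tendsto ξ
      have h2 : Filter.Tendsto (fun w => Real.exp (-(α * g w))) (nhdsWithin ξ Ω)
          (nhds (Real.exp (-(α * 0)))) :=
        (Real.continuous_exp.tendsto _).comp (((hbd ξ hξf).const_mul α).neg)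
      have h3 : Filter.Tendsto h (nhdsWithin ξ Ω) (nhds (‖p.eval ξ‖)) := by
        have := h1.mul h2
        simpa [hhdef] using this
      exact h3.eventually_lt_const (lt_of_le_of_lt (hM ξ hξE) (lt_add_of_pos_right M hδ))
    exact le_of_lt (bw_max_principle Ω hopen hpre h hloc (M + δ)
      (Metric.closedBall 0 R₁) (isCompact_closedBall _ _) hfar hne hbdry z hz)
  -- pass to the limit α → n⁺
  intro z hz
  have hαbound : ∀ α : ℝ, (n:ℝ) < α →
      ‖p.eval z‖ ≤ M * Real.exp (α * g z) := by
    intro α hαn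
    have hk := key α hαn z hz
    rw [Real.exp_neg, ← div_eq_mul_inv] at hk
    exact (div_le_iff₀ (Real.exp_pos _)).mp hk
  have htend : Filter.Tendsto (fun α : ℝ => M * Real.exp (α * g z))
      (nhdsWithin (n:ℝ) (Set.Ioi (n:ℝ))) (nhds (M * Real.exp ((n:ℝ) * g z))) := by
    refine Filter.Tendsto.mono_left ?_ nhdsWithin_le_nhds
    exact ((continuous_const.mul (Real.continuous_exp.comp
      (continuous_id.mul continuous_const))).tendsto (n:ℝ))
  exact ge_of_tendsto htend (eventually_nhdsWithin_of_forall fun α hα => hαbound α hα)
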